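/- Let Q be a finite-dimensional commutative k-algebra with k-vector space bases {a_i}_{i=1}^m and {b_i}_{i=1}^m, define Θ: Hom_k(Q,k) → Q by Θ(φ) = Σ_{i=1}^m φ(a_i)·b_i, equip Hom_k(Q,k) with the Q-module structure (a·φ)(x) = φ(ax), and assume Θ is a homomorphism of Q-modules. Then there exists a unique k-linear form λ: Q → k such that λ(a_i b_j) = δ_ij for all i,j; moreover this λ is dualizing, i.e. the bilinear form Φ_λ(a,b) = λ(ab) is non-degenerate. -/

import Mathlib

/-- Let `Q` be a finite-dimensional commutative `k`-algebra with bases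
`{a_i}`, `{b_i}` and let `Θ : Hom_k(Q,k) → Q`, `Θ(φ) = Σ_i φ(a_i)·b_i`.  Assume `Θ` is a
homomorphism of `Q`-modules for the `Q`-module structure `(c·φ)(x) = φ(cx)` on the dual.
Then there is a unique `k`-linear form `λ : Q → k` with `λ(a_i b_j) = δ_ij` for all `i, j`;
moreover any such `λ` is dualizing: the bilinear form `Φ_λ(a,b) = λ(ab)` is
non-degenerate. -/
theorem stmt8 {k Q : Type*} [Field k] [CommRing Q] [Algebra k Q] {m : ℕ}
    (a b : Module.Basis (Fin m) k Q)
    (hTheta : ∀ (c : Q) (phi : Q →ₗ[k] k),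
      (∑ i, phi (c * a i) • b i) = c * ∑ i, phi (a i) • b i) :
    (∃! lam : Q →ₗ[k] k, ∀ i j, lam (a i * b j) = if i = j then 1 else 0) ∧
      (∀ lam : Q →ₗ[k] k, (∀ i j, lam (a i * b j) = if i = j then 1 else 0) →
        ∀ x : Q, (∀ y : Q, lam (x * y) = 0) → x = 0) := by
  classical
  set c : Fin m → k := fun i => b.repr 1 i with hc
  have hone : (∑ j, c j • b j) = 1 := b.sum_repr 1
  -- any lam with the δ-property satisfies lam (a i) = c i
  have hval : ∀ (lam : Q →ₗ[k] k),
      (∀ i j, lam (a i * b j) = if i = j then 1 else 0) → ∀ i, lam (a i) = c i := by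
    intro lam hlam i
    have : lam (a i * ∑ j, c j • b j) = c i := by
      rw [Finset.mul_sum]
      simp only [mul_smul_comm, map_sum, map_smul, hlam, smul_eq_mul]
      simp
    simpa [hone] using this
  -- define the candidate lam0
  set lam0 : Q →ₗ[k] k := ∑ i, c i • a.coord i with hlam0
  have hlam0a : ∀ j, lam0 (a j) = c j := by
    intro j
    simp [hlam0, LinearMap.sum_apply, Module.Basis.coord_apply, Module.Basis.repr_self,
      Finsupp.single_apply, eq_comm]
  have hsum1 : (∑ i, lam0 (a i) • b i) = 1 := by
    simp only [hlam0a]; exact hone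
  have hprop : ∀ i j, lam0 (a i * b j) = if i = j then 1 else 0 := by
    intro i j
    have h := hTheta (b j) lam0
    rw [hsum1, mul_one] at h
    have h2 := congrArg (fun z => b.repr z i) h
    rw [show (fun i' => lam0 (b j * a i') • b i') = fun i' => lam0 (b j * a i') • b i'
      from rfl] at h2
    have h3 : b.repr (∑ i', (fun i' => lam0 (b j * a i')) i' • b i') i
        = lam0 (b j * a i) := by
      rw [b.repr_sum_self]
    rw [h3] at h2
    rw [mul_comm] at h2
    rw [h2, Module.Basis.repr_self_apply]
    simp [eq_comm]
  refine ⟨⟨lam0, hprop, ?_⟩, ?_⟩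
  · intro lam hlam
    apply Module.Basis.ext a
    intro i
    rw [hval lam hlam i, hlam0a i]
  · intro lam hlam x hx
    have h1 : (∑ i, lam (a i) • b i) = 1 := by
      simp only [hval lam hlam]; exact hone
    have h := hTheta x lam
    rw [h1, mul_one] at h
    have : (∑ i, lam (x * a i) • b i) = 0 := by
      simp [hx]
    rw [this] at h
    exact h.symm
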